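/- Let H be Hermitian and suppose its eigenvectors split into two orthogonal families labelled + and −, with all − eigenvalues at most E⁻_max. Let ψ be a normalized state with ⟨ψ|H|ψ⟩ ≥ E↑₀,min > E⁻_max and ⟨ψ|(H − ⟨H⟩)²|ψ⟩ ≤ σ². Then the weight of ψ on the − eigenspace satisfies ⟨ψ|Π_−|ψ⟩ ≤ σ²/(E⁻_max − E↑₀,min)², where Π_− is the orthogonal projection onto the span of the − eigenvectors. -/

import Mathlib

open scoped InnerProductSpace

/-- Chebyshev-type overlap bound.  `Π_−` is an orthogonal
projection commuting with the Hermitian `H`, on whose range `H ≤ E⁻_max`.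
A normalized state `ψ` with energy mean `≥ E↑₀,min > E⁻_max` and energy
variance `≤ σ²` has weight at most `σ²/(E⁻_max − E↑₀,min)²` on ran Π_−. -/
theorem low_variance_small_overlap
    {E : Type*} [NormedAddCommGroup E] [InnerProductSpace ℂ E]
    [FiniteDimensional ℂ E]
    (H Pm : E →ₗ[ℂ] E)
    (hH : LinearMap.IsSymmetric H) (hPm : LinearMap.IsSymmetric Pm)
    (hPmProj : Pm ∘ₗ Pm = Pm) (hcomm : Pm ∘ₗ H = H ∘ₗ Pm)
    (EmMax E0min σ : ℝ)
    (hminus : ∀ v, Pm v = v → (⟪v, H v⟫_ℂ).re ≤ EmMax * ‖v‖ ^ 2)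
    (ψ : E) (hψ : ‖ψ‖ = 1)
    (hmean : E0min ≤ (⟪ψ, H ψ⟫_ℂ).re)
    (hgap : EmMax < E0min)
    (hvar : ‖H ψ - (((⟪ψ, H ψ⟫_ℂ).re : ℝ) : ℂ) • ψ‖ ^ 2 ≤ σ ^ 2) :
    (⟪ψ, Pm ψ⟫_ℂ).re ≤ σ ^ 2 / (EmMax - E0min) ^ 2 := by
  set μ : ℝ := (⟪ψ, H ψ⟫_ℂ).re with hμ
  set v : E := Pm ψ with hv
  set w : E := H ψ - ((μ : ℝ) : ℂ) • ψ with hw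
  have hσ2 : (0:ℝ) ≤ σ ^ 2 := le_trans (by positivity) hvar
  have hden : (0:ℝ) < (E0min - EmMax) ^ 2 := by
    have h : E0min - EmMax ≠ 0 := by linarith
    positivity
  have hPvv : Pm v = v := by
    have := congrArg (fun f : E →ₗ[ℂ] E => f ψ) hPmProj
    simpa [hv] using this
  have hinner : ⟪ψ, Pm ψ⟫_ℂ = ⟪v, v⟫_ℂ := by
    calc ⟪ψ, Pm ψ⟫_ℂ = ⟪ψ, v⟫_ℂ := rfl
    _ = ⟪ψ, Pm v⟫_ℂ := by rw [hPvv]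
    _ = ⟪Pm ψ, v⟫_ℂ := (hPm ψ v).symm
    _ = ⟪v, v⟫_ℂ := rfl
  have hvv : (⟪v, v⟫_ℂ).re = ‖v‖ ^ 2 := inner_self_eq_norm_sq (𝕜 := ℂ) v
  have hgoal_lhs : (⟪ψ, Pm ψ⟫_ℂ).re = ‖v‖ ^ 2 := by rw [hinner]; exact hvv
  have hPHψ : Pm (H ψ) = H v := by
    have := congrArg (fun f : E →ₗ[ℂ] E => f ψ) hcomm
    simpa using this
  have hPmw : Pm w = H v - ((μ : ℝ) : ℂ) • v := by
    simp [hw, map_sub, map_smul, hPHψ]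
    rfl
  -- norm of projection bound
  have hPw_le : ‖Pm w‖ ≤ ‖w‖ := by
    have h1 : ⟪Pm w, Pm w⟫_ℂ = ⟪w, Pm w⟫_ℂ := by
      calc ⟪Pm w, Pm w⟫_ℂ = ⟪w, Pm (Pm w)⟫_ℂ := hPm w (Pm w)
      _ = ⟪w, Pm w⟫_ℂ := by
          have h := congrArg (fun f : E →ₗ[ℂ] E => f w) hPmProj
          simp only [LinearMap.comp_apply] at h
          rw [h]
    have h2 : ‖Pm w‖ ^ 2 = (⟪w, Pm w⟫_ℂ).re := by
      rw [← h1]; exact (inner_self_eq_norm_sq (𝕜 := ℂ) (Pm w)).symm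
    have h3 : (⟪w, Pm w⟫_ℂ).re ≤ ‖w‖ * ‖Pm w‖ := re_inner_le_norm (𝕜 := ℂ) w (Pm w)
    rcases eq_or_lt_of_le (norm_nonneg (Pm w)) with h | h
    · rw [← h]; exact norm_nonneg w
    · have : ‖Pm w‖ ^ 2 ≤ ‖w‖ * ‖Pm w‖ := h2 ▸ h3
      nlinarith
  -- lower bound from spectral assumption
  have hsm : (⟪v, ((μ : ℝ) : ℂ) • v - H v⟫_ℂ).re = μ * ‖v‖ ^ 2 - (⟪v, H v⟫_ℂ).re := by
    rw [inner_sub_right, inner_smul_right, Complex.sub_re, Complex.re_ofReal_mul, hvv]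
  have hlow : (μ - EmMax) * ‖v‖ ^ 2 ≤ (⟪v, ((μ : ℝ) : ℂ) • v - H v⟫_ℂ).re := by
    rw [hsm]
    have := hminus v hPvv
    linarith
  have hcs : (⟪v, ((μ : ℝ) : ℂ) • v - H v⟫_ℂ).re ≤ ‖v‖ * ‖Pm w‖ := by
    have h : (⟪v, ((μ : ℝ) : ℂ) • v - H v⟫_ℂ).re ≤ ‖v‖ * ‖((μ : ℝ) : ℂ) • v - H v‖ :=
      re_inner_le_norm (𝕜 := ℂ) v _
    have hn : ‖((μ : ℝ) : ℂ) • v - H v‖ = ‖Pm w‖ := by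
      rw [hPmw, norm_sub_rev]
    rw [hn] at h
    exact h
  -- combine
  have key : (μ - EmMax) * ‖v‖ ^ 2 ≤ ‖v‖ * ‖w‖ := by
    calc (μ - EmMax) * ‖v‖ ^ 2 ≤ ‖v‖ * ‖Pm w‖ := le_trans hlow hcs
    _ ≤ ‖v‖ * ‖w‖ := by
        exact mul_le_mul_of_nonneg_left hPw_le (norm_nonneg v)
  have hw2 : ‖w‖ ^ 2 ≤ σ ^ 2 := hvar
  rw [hgoal_lhs]
  have hsq : (EmMax - E0min) ^ 2 = (E0min - EmMax) ^ 2 := by ring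
  rw [hsq]
  rcases eq_or_lt_of_le (norm_nonneg v) with h0 | h0
  · have hz : ‖v‖ ^ 2 = 0 := by rw [← h0]; ring
    rw [hz]
    exact div_nonneg hσ2 hden.le
  · -- divide by ‖v‖ then square
    have h1 : (E0min - EmMax) * ‖v‖ ≤ ‖w‖ := by
      have h2 : (μ - EmMax) * ‖v‖ ≤ ‖w‖ := by
        have := key
        nlinarith
      nlinarith
    have h2 : (E0min - EmMax) ^ 2 * ‖v‖ ^ 2 ≤ σ ^ 2 := by
      have hpos : 0 ≤ (E0min - EmMax) * ‖v‖ := by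
        have : 0 < E0min - EmMax := by linarith
        positivity
      nlinarith [norm_nonneg w]
    rw [le_div_iff₀ hden]
    have hc : ‖v‖ ^ 2 * (E0min - EmMax) ^ 2 = (E0min - EmMax) ^ 2 * ‖v‖ ^ 2 := mul_comm _ _
    linarith
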